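/- Let U ⊂ ℝ^n be open bounded convex, f ∈ C^1(U̅), ω ≥ 0 with ∫_U ω = 1, and t ≥ 1. Then for every x ∈ U, |f(x) − ∫_U f ω dy|^t ≤ ∫_U ω(y) |y − x|^{t-1} ∫_0^{|y−x|} |df_{x + sθ(x,y)}(θ(x,y))|^t ds dy, where θ(x,y) = (y − x)/|y − x|. -/

import Mathlib

open MeasureTheory Set ENNReal

/-- Weighted power-mean/Hölder inequality in `ℝ≥0∞`. -/
lemma holder_pow_aux {α : Type*} [MeasurableSpace α] (μ : Measure α) {H w : α → ℝ≥0∞}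
    (hH : AEMeasurable H μ) (hw : AEMeasurable w μ)
    {t : ℝ} (ht : 1 ≤ t) :
    (∫⁻ a, H a * w a ∂μ) ^ t ≤ (∫⁻ a, w a ∂μ) ^ (t - 1) * ∫⁻ a, H a ^ t * w a ∂μ := by
  rcases eq_or_lt_of_le ht with rfl | htlt
  · simp
  have ht0 : (0:ℝ) < t := by linarith
  have hpq : t.HolderConjugate (Real.conjExponent t) := Real.HolderConjugate.conjExponent htlt
  set q := Real.conjExponent t with hq
  have hsum : 1 / t + 1 / q = 1 := by
    rw [one_div, one_div]; exact hpq.inv_add_inv_eq_one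
  have hq0 : (0:ℝ) < q := hpq.symm.pos
  have hkey := ENNReal.lintegral_mul_le_Lp_mul_Lq μ hpq
      (f := fun a => H a * w a ^ (1 / t)) (g := fun a => w a ^ (1 / q))
      (hH.mul (hw.pow_const _)) (hw.pow_const _)
  have h1 : ∀ a, H a * w a ^ (1 / t) * w a ^ (1 / q) = H a * w a := by
    intro a
    rw [mul_assoc, ← ENNReal.rpow_add_of_nonneg _ _ (by positivity) (by positivity), hsum,
      ENNReal.rpow_one]
  have h2 : ∀ a, (H a * w a ^ (1 / t)) ^ t = H a ^ t * w a := by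
    intro a
    rw [ENNReal.mul_rpow_of_nonneg _ _ ht0.le, ← ENNReal.rpow_mul,
      one_div_mul_cancel ht0.ne', ENNReal.rpow_one]
  have h3 : ∀ a, (w a ^ (1 / q)) ^ q = w a := by
    intro a
    rw [← ENNReal.rpow_mul, one_div_mul_cancel hq0.ne', ENNReal.rpow_one]
  simp only [Pi.mul_apply, h1, h2, h3] at hkey
  have := ENNReal.rpow_le_rpow hkey ht0.le
  calc (∫⁻ a, H a * w a ∂μ) ^ t
      ≤ ((∫⁻ a, H a ^ t * w a ∂μ) ^ (1 / t) * (∫⁻ a, w a ∂μ) ^ (1 / q)) ^ t := this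
    _ = (∫⁻ a, w a ∂μ) ^ (t - 1) * ∫⁻ a, H a ^ t * w a ∂μ := by
        rw [ENNReal.mul_rpow_of_nonneg _ _ ht0.le, ← ENNReal.rpow_mul, ← ENNReal.rpow_mul,
          one_div_mul_cancel ht0.ne', ENNReal.rpow_one, mul_comm]
        congr 2
        have h4 : t - 1 ≠ 0 := sub_ne_zero.mpr (ne_of_gt htlt)
        rw [hpq.conjugate_eq]
        field_simp

/-- Pointwise Jensen bound: for `f ∈ C¹(closure U)` on an open bounded
convex `U`, a probability density `ω` on `U` and `t ≥ 1`, for every `x ∈ U`,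
`|f(x) - ∫ f ω|^t ≤ ∫ ω(y) |y-x|^{t-1} ∫₀^{|y-x|} |df_{x+sθ}(θ)|^t ds dy`, where
`θ = (y-x)/|y-x|`. -/
theorem stmt7 (n : ℕ) (hn : 1 ≤ n) (U : Set (EuclideanSpace ℝ (Fin n)))
    (hUo : IsOpen U) (hUb : Bornology.IsBounded U) (hUc : Convex ℝ U)
    (f ω : EuclideanSpace ℝ (Fin n) → ℝ)
    (hf : ContDiffOn ℝ 1 f (closure U))
    (hω : ∀ x, 0 ≤ ω x) (hω1 : (∫ y in U, ω y) = 1)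
    (t : ℝ) (ht : 1 ≤ t) :
    ∀ x ∈ U,
      ENNReal.ofReal (|f x - ∫ y in U, f y * ω y| ^ t) ≤
        ∫⁻ y in U, ENNReal.ofReal (ω y * ‖y - x‖ ^ (t - 1)) *
          ∫⁻ s in Set.Ioc (0 : ℝ) ‖y - x‖,
            ENNReal.ofReal
              (|fderivWithin ℝ f (closure U) (x + s • (‖y - x‖⁻¹ • (y - x)))
                  (‖y - x‖⁻¹ • (y - x))| ^ t) := by
  intro x hx
  have ht0 : (0:ℝ) < t := lt_of_lt_of_le one_pos ht
  set F := fderivWithin ℝ f (closure U) with hFdef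
  have hUm : MeasurableSet U := hUo.measurableSet
  have hclconv : Convex ℝ (closure U) := hUc.closure
  have hxint : x ∈ interior (closure U) :=
    interior_mono subset_closure (by rwa [hUo.interior_eq])
  have hUD : UniqueDiffOn ℝ (closure U) := uniqueDiffOn_convex hclconv ⟨x, hxint⟩
  have hfc : ContinuousOn f (closure U) := hf.continuousOn
  have hfU : ContinuousOn f U := hfc.mono subset_closure
  have hFc : ContinuousOn F (closure U) := hf.continuousOn_fderivWithin hUD le_rfl
  have hKcomp : IsCompact (closure U) := hUb.isCompact_closure
  obtain ⟨C, hC⟩ := hKcomp.exists_bound_of_continuousOn hfc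
  -- integrability of ω
  have hωint : IntegrableOn ω U := by
    by_contra h
    rw [integral_undef h] at hω1
    exact one_ne_zero hω1.symm
  -- integrability of f * ω on U
  have hfωint : IntegrableOn (fun y => f y * ω y) U :=
    Integrable.bdd_mul hωint (hfU.aestronglyMeasurable hUm)
      (((ae_restrict_mem hUm).mono fun y hy => by
        simpa [Real.norm_eq_abs] using hC y (subset_closure hy)))
  have habs_bd : ∀ᵐ y ∂(volume.restrict U), ‖|f x - f y|‖ ≤ C + C :=
    (ae_restrict_mem hUm).mono fun y hy => by
      have h1 := hC x (subset_closure hx)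
      have h2 := hC y (subset_closure hy)
      simp only [Real.norm_eq_abs, abs_abs] at *
      calc |f x - f y| ≤ |f x| + |f y| := abs_sub _ _
        _ ≤ C + C := add_le_add h1 h2
  have hgcont : ContinuousOn (fun y => |f x - f y|) U := (continuousOn_const.sub hfU).abs
  have hgωint : IntegrableOn (fun y => |f x - f y| * ω y) U :=
    Integrable.bdd_mul hωint (hgcont.aestronglyMeasurable hUm) habs_bd
  -- Step 1 : |f x - ∫ f ω| ≤ ∫ |f x - f y| ω y
  have h1 : ∫ y in U, (f x - f y) * ω y = f x - ∫ y in U, f y * ω y := by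
    have : ∀ y, (f x - f y) * ω y = f x * ω y - f y * ω y := fun y => by ring
    simp only [this]
    rw [integral_sub (hωint.const_mul (f x)) hfωint, integral_const_mul, hω1, mul_one]
  have step1 : |f x - ∫ y in U, f y * ω y| ≤ ∫ y in U, |f x - f y| * ω y := by
    rw [← h1]
    calc |∫ y in U, (f x - f y) * ω y| = ‖∫ y in U, (f x - f y) * ω y‖ :=
          (Real.norm_eq_abs _).symm
      _ ≤ ∫ y in U, ‖(f x - f y) * ω y‖ := norm_integral_le_integral_norm _
      _ = ∫ y in U, |f x - f y| * ω y := by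
          refine integral_congr_ae (Filter.Eventually.of_forall fun y => ?_)
          show ‖(f x - f y) * ω y‖ = |f x - f y| * ω y
          rw [Real.norm_eq_abs, abs_mul, abs_of_nonneg (hω y)]
  -- Step 2 : pass to lintegral
  have step2 : ENNReal.ofReal (∫ y in U, |f x - f y| * ω y) =
      ∫⁻ y in U, ENNReal.ofReal |f x - f y| * ENNReal.ofReal (ω y) := by
    rw [ofReal_integral_eq_lintegral_ofReal hgωint
      (ae_of_all _ fun y => mul_nonneg (abs_nonneg _) (hω y))]
    exact lintegral_congr fun y => ENNReal.ofReal_mul (abs_nonneg _)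
  -- measurability
  have hH : AEMeasurable (fun y => ENNReal.ofReal |f x - f y|) (volume.restrict U) :=
    (hgcont.aestronglyMeasurable hUm).aemeasurable.ennreal_ofReal
  have hw : AEMeasurable (fun y => ENNReal.ofReal (ω y)) (volume.restrict U) :=
    hωint.aestronglyMeasurable.aemeasurable.ennreal_ofReal
  have hwone : ∫⁻ y in U, ENNReal.ofReal (ω y) = 1 := by
    rw [← ofReal_integral_eq_lintegral_ofReal hωint (ae_of_all _ hω), hω1, ENNReal.ofReal_one]
  -- Step 3 : Jensen over U
  have step3 : (∫⁻ y in U, ENNReal.ofReal |f x - f y| * ENNReal.ofReal (ω y)) ^ t ≤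
      ∫⁻ y in U, ENNReal.ofReal |f x - f y| ^ t * ENNReal.ofReal (ω y) := by
    have := holder_pow_aux (volume.restrict U) hH hw ht
    rwa [hwone, ENNReal.one_rpow, one_mul] at this
  -- Pointwise key estimate
  have key : ∀ y ∈ U, ENNReal.ofReal |f x - f y| ^ t ≤
      ENNReal.ofReal (‖y - x‖ ^ (t - 1)) *
        ∫⁻ s in Set.Ioc (0 : ℝ) ‖y - x‖,
          ENNReal.ofReal
            (|F (x + s • (‖y - x‖⁻¹ • (y - x))) (‖y - x‖⁻¹ • (y - x))| ^ t) := by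
    intro y hy
    by_cases hyx : y = x
    · subst hyx
      simp [ENNReal.zero_rpow_of_pos ht0]
    have hr : 0 < ‖y - x‖ := norm_pos_iff.mpr (sub_ne_zero.mpr hyx)
    set r := ‖y - x‖ with hrdef
    set θ : EuclideanSpace ℝ (Fin n) := r⁻¹ • (y - x) with hθdef
    set L : ℝ → EuclideanSpace ℝ (Fin n) := fun s => x + s • θ with hLdef
    have hLU : ∀ s ∈ Icc (0:ℝ) r, L s ∈ U := by
      intro s hs
      have hLs : L s = x + (s / r) • (y - x) := by
        simp only [hLdef, hθdef, smul_smul, div_eq_mul_inv]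
      rw [hLs]
      exact hUc.add_smul_sub_mem hx hy
        ⟨div_nonneg hs.1 hr.le, div_le_one_of_le₀ hs.2 hr.le⟩
    set g' : ℝ → ℝ := fun s => F (L s) θ with hg'def
    have hL : ∀ s : ℝ, HasDerivAt L θ s := fun s => by
      simpa [hLdef] using ((hasDerivAt_id s).smul_const θ).const_add x
    have hderiv : ∀ s ∈ Icc (0:ℝ) r, HasDerivAt (fun u => f (L u)) (g' s) s := by
      intro s hs
      have hzU := hLU s hs
      have hnhds : closure U ∈ nhds (L s) :=
        Filter.mem_of_superset (hUo.mem_nhds hzU) subset_closure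
      have hdiff : DifferentiableAt ℝ f (L s) :=
        ((hf.differentiableOn one_ne_zero) (L s) (subset_closure hzU)).differentiableAt hnhds
      have hcomp := hdiff.hasFDerivAt.comp_hasDerivAt s (hL s)
      have heq : fderiv ℝ f (L s) θ = g' s := by
        simp only [hg'def, hFdef]
        rw [fderivWithin_of_mem_nhds hnhds]
      rw [heq] at hcomp
      exact hcomp
    have hLcont : ContinuousOn L (Icc 0 r) :=
      (continuous_const.add (continuous_id.smul continuous_const)).continuousOn
    have hcontg : ContinuousOn g' (Icc 0 r) :=
      ((hFc.comp hLcont fun s hs => subset_closure (hLU s hs)).clm_apply continuousOn_const)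
    have hint : IntervalIntegrable g' volume 0 r :=
      (hcontg.mono (by rw [uIcc_of_le hr.le])).intervalIntegrable
    have hftc : ∫ s in (0:ℝ)..r, g' s = f y - f x := by
      rw [intervalIntegral.integral_eq_sub_of_hasDerivAt
        (fun s hs => hderiv s (by rwa [uIcc_of_le hr.le] at hs)) hint]
      congr 1
      · show f (L r) = f y
        have : L r = y := by
          simp only [hLdef, hθdef, smul_smul, mul_inv_cancel₀ hr.ne', one_smul]
          abel
        rw [this]
      · show f (L 0) = f x
        simp [hLdef]
    have habs : |f x - f y| ≤ ∫ s in (0:ℝ)..r, |g' s| := by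
      rw [abs_sub_comm, ← hftc]
      exact intervalIntegral.abs_integral_le_integral_abs hr.le
    have hgi : IntegrableOn (fun s => |g' s|) (Ioc 0 r) :=
      (hcontg.abs.integrableOn_compact isCompact_Icc).mono_set Ioc_subset_Icc_self
    have hofReal : ENNReal.ofReal (∫ s in (0:ℝ)..r, |g' s|) =
        ∫⁻ s in Ioc (0:ℝ) r, ENNReal.ofReal |g' s| := by
      rw [intervalIntegral.integral_of_le hr.le,
        ofReal_integral_eq_lintegral_ofReal hgi (ae_of_all _ fun s => abs_nonneg _)]
    have hGm : AEMeasurable (fun s => ENNReal.ofReal |g' s|) (volume.restrict (Ioc 0 r)) :=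
      (((hcontg.mono Ioc_subset_Icc_self).abs.aestronglyMeasurable
        measurableSet_Ioc).aemeasurable).ennreal_ofReal
    have hJ := holder_pow_aux (volume.restrict (Ioc (0:ℝ) r)) hGm
      (aemeasurable_const (b := (1:ℝ≥0∞))) ht
    simp only [mul_one, lintegral_const, Measure.restrict_apply MeasurableSet.univ,
      univ_inter, Real.volume_Ioc, sub_zero, one_mul] at hJ
    calc ENNReal.ofReal |f x - f y| ^ t
        ≤ ENNReal.ofReal (∫ s in (0:ℝ)..r, |g' s|) ^ t :=
          ENNReal.rpow_le_rpow (ENNReal.ofReal_le_ofReal habs) ht0.le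
      _ = (∫⁻ s in Ioc (0:ℝ) r, ENNReal.ofReal |g' s|) ^ t := by rw [hofReal]
      _ ≤ ENNReal.ofReal r ^ (t - 1) * ∫⁻ s in Ioc (0:ℝ) r, ENNReal.ofReal |g' s| ^ t := hJ
      _ = ENNReal.ofReal (r ^ (t - 1)) *
            ∫⁻ s in Ioc (0:ℝ) r, ENNReal.ofReal (|g' s| ^ t) := by
          rw [ENNReal.ofReal_rpow_of_nonneg hr.le (by linarith : (0:ℝ) ≤ t - 1)]
          congr 1
          exact lintegral_congr fun s =>
            ENNReal.ofReal_rpow_of_nonneg (abs_nonneg _) ht0.le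
  -- Step 4 : combine
  have step4 : (∫⁻ y in U, ENNReal.ofReal |f x - f y| ^ t * ENNReal.ofReal (ω y)) ≤
      ∫⁻ y in U, ENNReal.ofReal (ω y * ‖y - x‖ ^ (t - 1)) *
        ∫⁻ s in Set.Ioc (0 : ℝ) ‖y - x‖,
          ENNReal.ofReal
            (|F (x + s • (‖y - x‖⁻¹ • (y - x))) (‖y - x‖⁻¹ • (y - x))| ^ t) := by
    refine lintegral_mono_ae ((ae_restrict_mem hUm).mono fun y hy => ?_)
    calc ENNReal.ofReal |f x - f y| ^ t * ENNReal.ofReal (ω y)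
        ≤ (ENNReal.ofReal (‖y - x‖ ^ (t - 1)) *
            ∫⁻ s in Set.Ioc (0 : ℝ) ‖y - x‖,
              ENNReal.ofReal
                (|F (x + s • (‖y - x‖⁻¹ • (y - x))) (‖y - x‖⁻¹ • (y - x))| ^ t)) *
            ENNReal.ofReal (ω y) :=
          mul_le_mul_of_nonneg_right (key y hy) (by positivity)
      _ = ENNReal.ofReal (ω y * ‖y - x‖ ^ (t - 1)) *
            ∫⁻ s in Set.Ioc (0 : ℝ) ‖y - x‖,
              ENNReal.ofReal
                (|F (x + s • (‖y - x‖⁻¹ • (y - x))) (‖y - x‖⁻¹ • (y - x))| ^ t) := by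
          rw [ENNReal.ofReal_mul (hω y)]
          ring
  calc ENNReal.ofReal (|f x - ∫ y in U, f y * ω y| ^ t)
      = ENNReal.ofReal |f x - ∫ y in U, f y * ω y| ^ t :=
        (ENNReal.ofReal_rpow_of_nonneg (abs_nonneg _) ht0.le).symm
    _ ≤ ENNReal.ofReal (∫ y in U, |f x - f y| * ω y) ^ t :=
        ENNReal.rpow_le_rpow (ENNReal.ofReal_le_ofReal step1) ht0.le
    _ = (∫⁻ y in U, ENNReal.ofReal |f x - f y| * ENNReal.ofReal (ω y)) ^ t := by rw [step2]
    _ ≤ ∫⁻ y in U, ENNReal.ofReal |f x - f y| ^ t * ENNReal.ofReal (ω y) := step3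
    _ ≤ _ := step4
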